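/- For all integers 0 ≤ i ≤ d, the linear form Ψ satisfies Ψ(qbase(i,x,d)_q) = (-1)^{d-i} q^{-C(d-i,2)} / ([d+1]_q · qbinom(d,i)_q). -/

import Mathlib

open Polynomial Finset

noncomputable section

/-- The field ℚ(q) of rational functions. -/
abbrev K : Type := RatFunc ℚ

/-- The variable q of ℚ(q). -/
def qq : K := RatFunc.X

/-- The q-integer [n]_t = (t^n - 1)/(t - 1), for n ∈ ℤ. -/
def qint (t : K) (n : ℤ) : K := (t ^ n - 1) / (t - 1)

/-- The q-factorial [n]!_t. -/
def qfact (t : K) (n : ℕ) : K := ∏ i ∈ range n, qint t (i + 1)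

/-- The generalized q-binomial qbinom(m, n)_t = [m]_t [m-1]_t ⋯ [m-n+1]_t / [n]!_t. -/
def qbinom (t : K) (m : ℤ) (n : ℕ) : K := (∏ i ∈ range n, qint t (m - i)) / qfact t n

/-- The q-binomial with the vanishing convention: 0 unless 0 ≤ n ≤ m. -/
def qbinomv (t : K) (m n : ℤ) : K :=
  if 0 ≤ n ∧ n ≤ m then (∏ i ∈ range n.toNat, qint t (m - i)) / qfact t n.toNat else 0

/-- The polynomial [n, x]_t = [n]_t + t^n x. -/
def qb (t : K) (n : ℤ) : Polynomial K := C (qint t n) + C (t ^ n) * X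

/-- The polynomial qbase(m, x, n)_t = [m-n+1,x]_t ⋯ [m,x]_t / [n]!_t. -/
def qbase (t : K) (m : ℤ) (n : ℕ) : Polynomial K :=
  (∏ i ∈ range n, qb t (m - n + 1 + i)) * C (qfact t n)⁻¹

/-- The linear form V: essentially (1/q) times the derivative at x = [-1]_q = -1/q. -/
def qV (E : Polynomial K) : K := (Polynomial.derivative E).eval (-qq⁻¹) / qq

/-- The defining property of the q-summation operator Σ:
(ΣE)([n]_q) = Σ_{j=0}^n q^j E([j]_q) for all n ≥ 0. -/
def IsQSigma (S : Polynomial K →ₗ[K] Polynomial K) : Prop :=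
  ∀ E : Polynomial K, ∀ n : ℕ,
    (S E).eval (qint qq n) = ∑ j ∈ range (n + 1), qq ^ j * E.eval (qint qq j)

lemma qq_ne_zero : qq ≠ 0 := RatFunc.X_ne_zero
lemma intDegree_qq_pow (n : ℕ) : (qq ^ n).intDegree = n := by
  induction n with
  | zero => simp [RatFunc.intDegree_one]
  | succ k ih =>
    rw [pow_succ, RatFunc.intDegree_mul (pow_ne_zero _ qq_ne_zero) qq_ne_zero, ih,
      qq, RatFunc.intDegree_X]
    push_cast; ring
lemma qq_pow_ne_one {n : ℕ} (hn : n ≠ 0) : qq ^ n ≠ (1:K) := by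
  intro h
  have := congrArg RatFunc.intDegree h
  rw [intDegree_qq_pow, RatFunc.intDegree_one] at this
  exact hn (by exact_mod_cast this)
lemma qq_ne_one : qq ≠ (1:K) := by
  have := qq_pow_ne_one (n := 1) one_ne_zero
  simpa using this
lemma qq_sub_one_ne : qq - 1 ≠ (0:K) := sub_ne_zero.mpr qq_ne_one
lemma qq_zpow_ne_one {n : ℤ} (hn : n ≠ 0) : qq ^ n ≠ (1:K) := by
  rcases lt_trichotomy n 0 with h | h | h
  · intro he
    have h1 : qq ^ n = (qq ^ (-n))⁻¹ := by
      rw [← zpow_neg, neg_neg]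
    rw [h1, inv_eq_one] at he
    rw [← Int.toNat_of_nonneg (by omega : (0:ℤ) ≤ -n), zpow_natCast] at he
    exact qq_pow_ne_one (by omega) he
  · exact absurd h hn
  · rw [← Int.toNat_of_nonneg h.le, zpow_natCast]
    exact qq_pow_ne_one (by omega)
lemma qq_zpow_ne_zero (n : ℤ) : qq ^ n ≠ (0:K) := zpow_ne_zero _ qq_ne_zero
lemma qint_ne_zero {n : ℤ} (hn : n ≠ 0) : qint qq n ≠ 0 :=
  div_ne_zero (sub_ne_zero.mpr (qq_zpow_ne_one hn)) qq_sub_one_ne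
lemma qint_zero : qint qq 0 = 0 := by simp [qint]
lemma qint_one : qint qq 1 = 1 := by
  simp only [qint, zpow_one]; exact div_self qq_sub_one_ne
lemma qint_add (a b : ℤ) : qint qq (a + b) = qint qq a + qq ^ a * qint qq b := by
  rw [qint, qint, qint, zpow_add₀ qq_ne_zero]
  field_simp
  ring
lemma qint_neg (n : ℤ) : qint qq (-n) = -(qq ^ (-n) * qint qq n) := by
  rw [qint, qint, zpow_neg]
  have h1 := qq_sub_one_ne
  have h2 := qq_zpow_ne_zero n
  field_simp
  ring
lemma qfact_ne_zero (n : ℕ) : qfact qq n ≠ 0 := by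
  rw [qfact]
  exact prod_ne_zero_iff.mpr (fun i _ => qint_ne_zero (by omega))

lemma qfact_succ (n : ℕ) : qfact qq (n+1) = qfact qq n * qint qq (n+1) := by
  rw [qfact, qfact, prod_range_succ]

lemma qpascal (m : ℤ) (d : ℕ) :
    qbinom qq (m+1) (d+1) = qbinom qq m (d+1) + qq ^ (m - d) * qbinom qq m d := by
  have h1 : ∏ k ∈ range (d+1), qint qq (m + 1 - k)
      = (∏ k ∈ range d, qint qq (m - k)) * qint qq (m+1) := by
    rw [prod_range_succ']
    congr 1
    · apply prod_congr rfl; intro k _; congr 1; push_cast; ring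
    · congr 1; ring
  have h2 : ∏ k ∈ range (d+1), qint qq (m - k)
      = (∏ k ∈ range d, qint qq (m - k)) * qint qq (m - d) := by
    rw [prod_range_succ]
  have h3 : qint qq (m+1) = qint qq (m - d) + qq ^ (m - (d:ℤ)) * qint qq (d+1) := by
    have := qint_add (m - d) (d+1)
    rw [show m - (d:ℤ) + (d+1) = m + 1 by ring] at this
    exact this
  rw [qbinom, qbinom, qbinom, h1, h2, h3, qfact_succ]
  have h4 := qfact_ne_zero d
  have h5 := qint_ne_zero (n := (d:ℤ)+1) (by omega)
  field_simp

lemma qb_eval (n : ℤ) (x : K) : (qb qq n).eval x = qint qq n + qq ^ n * x := by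
  simp [qb]

lemma qb_eval_qint (n j : ℤ) : (qb qq n).eval (qint qq j) = qint qq (n + j) := by
  rw [qb_eval, qint_add]

lemma qbase_eval (m : ℤ) (n : ℕ) (j : ℤ) :
    (qbase qq m n).eval (qint qq j) = qbinom qq (m + j) n := by
  rw [qbase, eval_mul, eval_prod, eval_C, qbinom, div_eq_mul_inv]
  congr 1
  rw [← prod_range_reflect (fun k => qint qq (m + j - k)) n]
  apply prod_congr rfl
  intro k hk
  rw [mem_range] at hk
  rw [qb_eval_qint]
  congr 1
  have : ((n - 1 - k : ℕ) : ℤ) = (n:ℤ) - 1 - k := by omega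
  rw [this]; ring

lemma qbinom_zero_of (i d : ℕ) (hid : i ≤ d) : qbinom qq i (d+1) = 0 := by
  rw [qbinom, prod_eq_zero (i := i) (by simp; omega)]
  · simp
  · simp [qint_zero]

lemma hockey (i d : ℕ) (hid : i ≤ d) (n : ℕ) :
    ∑ j ∈ range (n+1), qq ^ j * qbinom qq (i+j) d
      = qq ^ ((d:ℤ) - i) * qbinom qq (i+n+1) (d+1) := by
  induction n with
  | zero =>
    have hp := qpascal i d
    rw [qbinom_zero_of i d hid, zero_add] at hp
    simp only [sum_range_one, pow_zero, one_mul, Nat.cast_zero, add_zero]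
    rw [hp, ← mul_assoc, ← zpow_add₀ qq_ne_zero]
    simp
  | succ n ih =>
    rw [sum_range_succ, ih]
    push_cast
    rw [show (i:ℤ) + ((n:ℤ)+1) + 1 = ((i:ℤ)+(n:ℤ)+1) + 1 from by ring,
      show (i:ℤ) + ((n:ℤ)+1) = ((i:ℤ)+(n:ℤ)+1) from by ring,
      qpascal ((i:ℤ)+n+1) d]
    rw [mul_add, ← mul_assoc, ← zpow_add₀ qq_ne_zero]
    rw [show (d:ℤ) - i + ((i:ℤ)+n+1 - d) = ((n:ℤ)+1) from by ring]
    rw [show qq ^ ((n:ℤ)+1) = qq ^ (n+1) from by rw [← zpow_natCast]; norm_cast]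

lemma qint_nat_inj : Function.Injective (fun n : ℕ => qint qq n) := by
  intro a b h
  simp only [qint] at h
  have h2 : qq ^ (a:ℤ) = qq ^ (b:ℤ) := by
    have := congrArg (· * (qq-1)) h
    simp only [div_mul_cancel₀ _ qq_sub_one_ne] at this
    exact sub_left_inj.mp this
  by_contra hne
  have h3 : qq ^ ((a:ℤ) - b) = 1 := by
    rw [zpow_sub₀ qq_ne_zero, h2, div_self (qq_zpow_ne_zero _)]
  exact qq_zpow_ne_one (sub_ne_zero.mpr (by exact_mod_cast hne)) h3

lemma S_eq (S : Polynomial K →ₗ[K] Polynomial K) (hS : IsQSigma S) (i d : ℕ) (hid : i ≤ d) :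
    S (qbase qq i d) = C (qq ^ ((d:ℤ) - i)) * qbase qq ((i:ℤ)+1) (d+1) := by
  apply eq_of_infinite_eval_eq
  apply Set.infinite_of_injective_forall_mem qint_nat_inj
  intro n
  show (S (qbase qq i d)).eval (qint qq n) = _
  rw [hS (qbase qq ↑i d) n]
  simp only [qbase_eval]
  rw [hockey i d hid n, eval_mul, eval_C, qbase_eval]
  rw [show (i:ℤ) + 1 + n = (i:ℤ) + n + 1 from by ring]

lemma qint_neg_one : qint qq (-1) = -qq⁻¹ := by
  have h := qint_neg 1
  rw [qint_one, mul_one, zpow_neg_one] at h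
  exact h

lemma qV_C_mul (c : K) (E : Polynomial K) : qV (C c * E) = c * qV E := by
  rw [qV, qV, derivative_C_mul, eval_mul, eval_C, mul_div_assoc]

lemma V_main (i d : ℕ) (hid : i ≤ d) :
    qV (qbase qq ((i:ℤ)+1) (d+1)) =
      (∏ k ∈ (range (d+1)).erase (d-i), qint qq ((i:ℤ)-(d:ℤ)+(k:ℕ))) * (qfact qq (d+1))⁻¹ := by
  have hmem : d - i ∈ range (d+1) := by simp
  have hprod : (∏ k ∈ range (d+1), qb qq ((i:ℤ)+1 - (↑(d+1):ℤ) + 1 + k))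
      = qb qq 1 * ∏ k ∈ (range (d+1)).erase (d-i), qb qq ((i:ℤ)+1 - (↑(d+1):ℤ) + 1 + k) := by
    conv_lhs => rw [← Finset.mul_prod_erase (range (d+1)) _ hmem]
    congr 2
    omega
  rw [qbase, hprod, qV]
  rw [derivative_mul, derivative_C, mul_zero, add_zero, derivative_mul]
  have hd1 : derivative (qb qq 1) = C qq := by
    simp [qb]
  have h0 : (qb qq 1).eval (-qq⁻¹) = 0 := by
    rw [← qint_neg_one, qb_eval_qint, show (1:ℤ) + -1 = 0 from rfl, qint_zero]
  rw [eval_mul, eval_add, eval_mul, eval_mul, h0, zero_mul, add_zero, hd1, eval_C, eval_C,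
    eval_prod]
  have hPe : ∀ k ∈ (range (d+1)).erase (d-i),
      (qb qq ((i:ℤ)+1 - (↑(d+1):ℤ) + 1 + k)).eval (-qq⁻¹) = qint qq ((i:ℤ)-(d:ℤ)+(k:ℕ)) := by
    intro k hk
    rw [← qint_neg_one, qb_eval_qint]
    congr 1
    push_cast
    ring
  rw [prod_congr rfl hPe, mul_comm qq, mul_right_comm, mul_div_assoc, div_self qq_ne_zero,
    mul_one]

lemma sumT (n : ℕ) : ∑ k ∈ range n, (k+1) = n.choose 2 + n := by
  have g := Finset.sum_range_id_mul_two n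
  have c := Nat.choose_two_right n
  have e : ∑ k ∈ range n, (k+1) = (∑ k ∈ range n, k) + n := by
    rw [Finset.sum_add_distrib, Finset.sum_const, card_range, smul_eq_mul, mul_one]
  generalize hg : n*(n-1) = m at g c
  omega

lemma prodA (n : ℕ) : ∏ k ∈ range n, qint qq ((k:ℤ) - n)
    = (-1)^n * (qq⁻¹)^(n.choose 2 + n) * qfact qq n := by
  rw [← prod_range_reflect (fun k => qint qq ((k:ℤ) - n)) n]
  rw [show (∏ k ∈ range n, qint qq (((n - 1 - k : ℕ):ℤ) - n))
      = ∏ k ∈ range n, ((-1) * ((qq⁻¹)^(k+1) * qint qq ((k:ℤ)+1))) from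
    prod_congr rfl fun k hk => by
      rw [mem_range] at hk
      have h1 : ((n - 1 - k : ℕ):ℤ) - n = -((k:ℤ)+1) := by omega
      rw [h1, qint_neg, show -((k:ℤ)+1) = -(((k+1:ℕ)):ℤ) from by push_cast; ring,
        zpow_neg, zpow_natCast, ← inv_pow, neg_eq_neg_one_mul]]
  rw [prod_mul_distrib, prod_mul_distrib, prod_const, card_range, prod_pow_eq_pow_sum, sumT]
  have hq : qfact qq n = ∏ x ∈ range n, qint qq ((x:ℤ)+1) := rfl
  rw [hq]
  ring

lemma prodB (i d : ℕ) (hid : i ≤ d) :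
    ∏ k ∈ Ico (d-i+1) (d+1), qint qq ((i:ℤ)-(d:ℤ)+k) = qfact qq i := by
  rw [Finset.prod_Ico_eq_prod_range, show d+1-(d-i+1) = i from by omega, qfact]
  apply prod_congr rfl
  intro k _
  congr 1
  omega

lemma erase_split (i d : ℕ) (hid : i ≤ d) :
    (range (d+1)).erase (d-i) = range (d-i) ∪ Ico (d-i+1) (d+1) := by
  ext x
  simp only [mem_erase, mem_range, mem_union, mem_Ico]
  omega

lemma qfact_split (i d : ℕ) (hid : i ≤ d) :
    qfact qq d = qfact qq (d-i) * ∏ k ∈ range i, qint qq ((d:ℤ) - k) := by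
  induction i with
  | zero => simp
  | succ m ih =>
    rw [prod_range_succ, ih (by omega)]
    have h1 : d - m = (d - (m+1)) + 1 := by omega
    rw [h1, qfact_succ, show ((d - (m+1) : ℕ):ℤ) + 1 = (d:ℤ) - m from by omega]
    ring

lemma pw (n : ℕ) : qq ^ ((n:ℤ)) * (qq⁻¹) ^ (n.choose 2 + n) = qq ^ (-(n.choose 2 : ℤ)) := by
  rw [inv_pow, ← zpow_natCast qq (n.choose 2 + n), ← zpow_neg, ← zpow_add₀ qq_ne_zero]
  congr 1
  push_cast
  ring


theorem psi_qbase (S : Polynomial K →ₗ[K] Polynomial K) (hS : IsQSigma S)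
    (i d : ℕ) (hid : i ≤ d) :
    qV (S (qbase qq i d)) =
      (-1) ^ (d - i) * qq ^ (-((d - i).choose 2 : ℤ)) / (qint qq (d + 1) * qbinom qq d i) := by
  rw [S_eq S hS i d hid, qV_C_mul, V_main i d hid, erase_split i d hid,
    prod_union (by simp only [Finset.disjoint_left, mem_range, mem_Ico]; omega)]
  rw [show (∏ k ∈ range (d-i), qint qq ((i:ℤ)-(d:ℤ)+k))
      = ∏ k ∈ range (d-i), qint qq ((k:ℤ) - (d-i:ℕ)) from
    prod_congr rfl fun k hk => by congr 1; omega]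
  rw [prodA, prodB i d hid]
  rw [show (d:ℤ) - i = ((d-i:ℕ):ℤ) from by omega]
  set n := d - i with hn
  rw [qbinom, qfact_succ d, qfact_split i d hid]
  have h0 := qfact_ne_zero i
  have h1 := qfact_ne_zero n
  have h2 : qint qq ((d:ℤ)+1) ≠ 0 := qint_ne_zero (by omega)
  have h3 : (∏ k ∈ range i, qint qq ((d:ℤ) - k)) ≠ 0 :=
    prod_ne_zero_iff.mpr fun k hk => qint_ne_zero (by rw [mem_range] at hk; omega)
  have h4 : qq ^ (-(n.choose 2 : ℤ)) ≠ 0 := qq_zpow_ne_zero _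
  calc qq ^ ((n:ℕ):ℤ) * ((-1)^n * (qq⁻¹)^(n.choose 2 + n) * qfact qq n * qfact qq i *
        (qfact qq (n) * (∏ k ∈ range i, qint qq ((d:ℤ) - k)) * qint qq ((d:ℤ)+1))⁻¹)
      = (qq ^ ((n:ℕ):ℤ) * (qq⁻¹)^(n.choose 2 + n)) * ((-1)^n * qfact qq n * qfact qq i *
        (qfact qq (n) * (∏ k ∈ range i, qint qq ((d:ℤ) - k)) * qint qq ((d:ℤ)+1))⁻¹) := by
        ring
    _ = (-1) ^ n * qq ^ (-(n.choose 2 : ℤ)) /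
        (qint qq ((d:ℤ) + 1) * ((∏ k ∈ range i, qint qq ((d:ℤ) - k)) / qfact qq i)) := by
        rw [pw]
        field_simp [h0, h1, h2, h3]


end
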